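/- Let p ≥ 2 and s ≥ 1 be integers. The subgroup of ℤ^s generated by the s cyclic shifts of the vector (p, 0, …, 0, −1), i.e. by the vectors p·e_i − e_{i+1 mod s} for 0 ≤ i ≤ s−1 (where e_i is the standard basis), equals the subgroup {(v_0, …, v_{s−1}) ∈ ℤ^s : ∑_{j=0}^{s−1} v_j p^j ≡ 0 (mod p^s − 1)}. -/
import Mathlib


theorem stmt_6 (p : ℤ) (s : ℕ) [NeZero s] (hp : 2 ≤ p) (v : Fin s → ℤ) :
    v ∈ AddSubgroup.closure
        {w : Fin s → ℤ | ∃ i : Fin s, w = p • Pi.single i (1 : ℤ) - Pi.single (i + 1) (1 : ℤ)} ↔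
      (p ^ s - 1) ∣ ∑ j, v j * p ^ (j : ℕ) := by
  have hs : 0 < s := Nat.pos_of_ne_zero (NeZero.ne s)
  set G : Set (Fin s → ℤ) :=
    {w : Fin s → ℤ | ∃ i : Fin s, w = p • Pi.single i (1 : ℤ) - Pi.single (i + 1) (1 : ℤ)} with hG
  constructor
  · intro hv
    -- forward: closure ≤ divisibility subgroup
    let S : AddSubgroup (Fin s → ℤ) :=
      { carrier := {w | (p ^ s - 1) ∣ ∑ j, w j * p ^ (j : ℕ)}
        zero_mem' := by simp
        add_mem' := by
          intro a b ha hb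
          simpa [add_mul, Finset.sum_add_distrib] using dvd_add ha hb
        neg_mem' := by
          intro a ha
          simpa [neg_mul, Finset.sum_neg_distrib] using ha.neg_right }
    have hle : AddSubgroup.closure G ≤ S := by
      rw [AddSubgroup.closure_le]
      rintro w ⟨i, rfl⟩
      show (p ^ s - 1) ∣ ∑ j : Fin s,
        ((p • Pi.single i (1:ℤ) - Pi.single (i+1) (1:ℤ) : Fin s → ℤ)) j * p ^ (j : ℕ)
      have : ∑ j, ((p • Pi.single i (1:ℤ) - Pi.single (i+1) (1:ℤ) : Fin s → ℤ)) j * p ^ (j : ℕ)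
          = p * p ^ (i : ℕ) - p ^ ((i+1 : Fin s) : ℕ) := by
        simp [Pi.single_apply, sub_mul, Finset.sum_sub_distrib, ite_mul, Finset.sum_ite_eq]
      rw [this]
      rcases Nat.lt_or_ge ((i : ℕ) + 1) s with h | h
      · have : ((i+1 : Fin s) : ℕ) = (i : ℕ) + 1 := by
          simp [Fin.val_add_one_of_lt, Fin.add_def, Nat.mod_eq_of_lt h]
        rw [this, pow_succ, mul_comm, sub_self]
        exact dvd_zero _
      · have hi : (i : ℕ) + 1 = s := le_antisymm i.isLt h
        have : ((i+1 : Fin s) : ℕ) = 0 := by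
          simp [Fin.add_def, hi]
        rw [this, pow_zero, ← pow_succ', hi]
    exact hle hv
  · intro hdvd
    obtain ⟨t, rfl⟩ : ∃ t, s = t + 1 := ⟨s - 1, (Nat.succ_pred_eq_of_pos hs).symm⟩
    -- key lemma A
    have key : ∀ n : ℕ, ∀ h : n < t + 1,
        (Pi.single (⟨n, h⟩ : Fin (t+1)) (1:ℤ) - p ^ n • Pi.single (0 : Fin (t+1)) (1:ℤ))
          ∈ AddSubgroup.closure G := by
      intro n
      induction n with
      | zero =>
        intro h
        have h0 : (⟨0, h⟩ : Fin (t+1)) = 0 := rfl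
        rw [h0, pow_zero, one_smul, sub_self]
        exact AddSubgroup.zero_mem _
      | succ n ih =>
        intro h
        have hn : n < t + 1 := Nat.lt_of_succ_lt h
        have hgen : (p • Pi.single (⟨n, hn⟩ : Fin (t+1)) (1:ℤ)
            - Pi.single ((⟨n, hn⟩ : Fin (t+1)) + 1) (1:ℤ)) ∈ AddSubgroup.closure G :=
          AddSubgroup.subset_closure ⟨_, rfl⟩
        have hfin : (⟨n, hn⟩ : Fin (t+1)) + 1 = ⟨n + 1, h⟩ := by
          ext
          simp [Fin.add_def, Nat.mod_eq_of_lt h]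
        rw [hfin] at hgen
        have := AddSubgroup.sub_mem _ (AddSubgroup.zsmul_mem _ (ih hn) p) hgen
        have heq : p • ((Pi.single (⟨n, hn⟩ : Fin (t+1)) (1:ℤ) : Fin (t+1) → ℤ)
              - p ^ n • Pi.single (0 : Fin (t+1)) 1)
            - (p • Pi.single (⟨n, hn⟩ : Fin (t+1)) (1:ℤ) - Pi.single (⟨n+1, h⟩ : Fin (t+1)) (1:ℤ))
            = Pi.single (⟨n+1, h⟩ : Fin (t+1)) (1:ℤ)
              - p ^ (n+1) • Pi.single (0 : Fin (t+1)) 1 := by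
          rw [pow_succ']
          module
        rwa [heq] at this
    have keyF : ∀ j : Fin (t+1),
        (Pi.single j (1:ℤ) - p ^ (j : ℕ) • Pi.single (0 : Fin (t+1)) (1:ℤ))
          ∈ AddSubgroup.closure G := by
      intro j
      simpa using key j.1 j.2
    -- key lemma B
    have hlast : ((Fin.last t) + 1 : Fin (t+1)) = 0 := by
      ext; simp [Fin.add_def]
    have hgenlast : (p • Pi.single (Fin.last t) (1:ℤ) - Pi.single (0 : Fin (t+1)) (1:ℤ))
        ∈ AddSubgroup.closure G := by
      have hmem : (p • Pi.single (Fin.last t) (1:ℤ) - Pi.single ((Fin.last t) + 1) (1:ℤ)) ∈ G :=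
        ⟨Fin.last t, rfl⟩
      have := AddSubgroup.subset_closure hmem
      rwa [hlast] at this
    have keyB : ((p ^ (t+1) - 1) • Pi.single (0 : Fin (t+1)) (1:ℤ)) ∈ AddSubgroup.closure G := by
      have h1 := keyF (Fin.last t)
      have := AddSubgroup.sub_mem _ hgenlast (AddSubgroup.zsmul_mem _ h1 p)
      have heq : (p • (Pi.single (Fin.last t) (1:ℤ) : Fin (t+1) → ℤ) - Pi.single (0 : Fin (t+1)) (1:ℤ))
          - p • (Pi.single (Fin.last t) (1:ℤ)
              - p ^ ((Fin.last t : Fin (t+1)) : ℕ) • Pi.single (0 : Fin (t+1)) (1:ℤ))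
          = (p ^ (t+1) - 1) • Pi.single (0 : Fin (t+1)) (1:ℤ) := by
        have : ((Fin.last t : Fin (t+1)) : ℕ) = t := rfl
        rw [this, sub_smul, one_smul, pow_succ']
        module
      rwa [heq] at this
    -- assemble
    obtain ⟨c, hc⟩ := hdvd
    have hv : v = (∑ j, v j • (Pi.single j (1:ℤ) - p ^ (j:ℕ) • Pi.single (0 : Fin (t+1)) (1:ℤ)))
        + c • ((p ^ (t+1) - 1) • Pi.single (0 : Fin (t+1)) (1:ℤ)) := by
      have h2 : ∑ j, v j • Pi.single j (1:ℤ) = v := by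
        simp [← Pi.single_smul, Finset.univ_sum_single]
      have h3 : ∑ j, (v j * p ^ (j:ℕ)) • (Pi.single (0 : Fin (t+1)) (1:ℤ) : Fin (t+1) → ℤ)
          = (c * (p ^ (t+1) - 1)) • Pi.single (0 : Fin (t+1)) (1:ℤ) := by
        rw [← Finset.sum_smul, hc, mul_comm]
      simp only [smul_sub, smul_smul]
      rw [Finset.sum_sub_distrib, h2, h3]
      abel
    rw [hv]
    exact AddSubgroup.add_mem _
      (AddSubgroup.sum_mem _ (fun j _ => AddSubgroup.zsmul_mem _ (keyF j) (v j)))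
      (AddSubgroup.zsmul_mem _ keyB c)
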